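/- Let X be a compact metric space, Γ a monoid acting minimally on X by continuous maps, H a real separable Hilbert space, and (Ψ, ρ) a continuous cocycle of affine isometries of H over this action. Endow X × H with the product of the topology of X and the weak topology of H. Let 𝓕 be the family of nonempty subsets M ⊆ X × H that are compact for this topology, forward-invariant under the skew action (for all f ∈ Γ, (x,v) ∈ M implies (f·x, Ψ(f,x)v + ρ(f,x)) ∈ M), and convex along the fibers (for each x ∈ X, the fiber M_x := {v : (x,v) ∈ M} is a convex subset of H). If M is a minimal element of 𝓕 with respect to inclusion (no proper nonempty subset of M belongs to 𝓕), then for every x ∈ X the fiber M_x consists of exactly one vector. -/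

import Mathlib

/-- The weak topology of a real inner product space `H`: the topology induced by all
continuous linear functionals on `H`. -/
noncomputable def weakTopology (H : Type*) [NormedAddCommGroup H] [InnerProductSpace ℝ H] :
    TopologicalSpace H :=
  TopologicalSpace.induced (fun v => fun l : H →L[ℝ] ℝ => l v) inferInstance

open scoped RealInnerProductSpace

/-- Type synonym for `H` carrying the weak topology. -/
def WkSyn (H : Type*) [NormedAddCommGroup H] [InnerProductSpace ℝ H] := H

noncomputable instance (H : Type*) [NormedAddCommGroup H] [InnerProductSpace ℝ H] :
    TopologicalSpace (WkSyn H) := weakTopology H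

/-- The identity map from the weak-topology synonym back to `H`. -/
def WkSyn.toH {H : Type*} [NormedAddCommGroup H] [InnerProductSpace ℝ H] (v : WkSyn H) : H := v

section Aux

variable {H : Type*} [NormedAddCommGroup H] [InnerProductSpace ℝ H]

lemma wkSyn_continuous_apply (l : H →L[ℝ] ℝ) :
    Continuous (fun v : WkSyn H => l v.toH) := by
  have h : Continuous (fun v : WkSyn H => (fun l' : H →L[ℝ] ℝ => l' v.toH)) :=
    continuous_induced_dom
  exact (continuous_apply l).comp h

lemma wkSyn_isClosed_ball (R : ℝ) (hR : 0 ≤ R) :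
    IsClosed {v : WkSyn H | ‖v.toH‖ ≤ R} := by
  have hset : {v : WkSyn H | ‖v.toH‖ ≤ R} =
      ⋂ y : H, {v : WkSyn H | (innerSL ℝ y) v.toH ≤ R * ‖y‖} := by
    ext v
    simp only [Set.mem_setOf_eq, Set.mem_iInter, innerSL_apply_apply]
    constructor
    · intro hv y
      calc ⟪y, v.toH⟫ ≤ ‖y‖ * ‖v.toH‖ := real_inner_le_norm _ _
        _ ≤ ‖y‖ * R := mul_le_mul_of_nonneg_left hv (norm_nonneg _)
        _ = R * ‖y‖ := mul_comm _ _
    · intro hv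
      rcases eq_or_ne v.toH 0 with h0 | h0
      · rw [h0]; simpa using hR
      · have h := hv v.toH
        rw [real_inner_self_eq_norm_mul_norm] at h
        have hn : 0 < ‖v.toH‖ := norm_pos_iff.mpr h0
        nlinarith
  rw [hset]
  exact isClosed_iInter fun y =>
    IsClosed.preimage (wkSyn_continuous_apply (innerSL ℝ y)) isClosed_Iic

lemma wkSyn_continuousOn_inner {X : Type*} [TopologicalSpace X]
    (a : X → H) (ha : Continuous a) (R : ℝ) :
    ContinuousOn (fun p : X × WkSyn H => ⟪a p.1, p.2.toH⟫)
      {p : X × WkSyn H | ‖p.2.toH‖ ≤ R} := by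
  intro p₀ hp₀
  have h2 : Continuous fun p : X × WkSyn H => ⟪a p₀.1, p.2.toH⟫ := by
    have h := (wkSyn_continuous_apply (H := H) (innerSL ℝ (a p₀.1))).comp
      (continuous_snd (X := X) (Y := WkSyn H))
    simpa [Function.comp_def] using h
  have h1 : Filter.Tendsto (fun p : X × WkSyn H => ⟪a p.1 - a p₀.1, p.2.toH⟫)
      (nhdsWithin p₀ {p : X × WkSyn H | ‖p.2.toH‖ ≤ R}) (nhds 0) := by
    have hb : ∀ᶠ p in nhdsWithin p₀ {p : X × WkSyn H | ‖p.2.toH‖ ≤ R},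
        ‖⟪a p.1 - a p₀.1, p.2.toH⟫‖ ≤ ‖a p.1 - a p₀.1‖ * R := by
      filter_upwards [self_mem_nhdsWithin] with p hp
      have hb1 : |⟪a p.1 - a p₀.1, p.2.toH⟫| ≤ ‖a p.1 - a p₀.1‖ * ‖p.2.toH‖ :=
        abs_real_inner_le_norm _ _
      have hb2 : ‖a p.1 - a p₀.1‖ * ‖p.2.toH‖ ≤ ‖a p.1 - a p₀.1‖ * R :=
        mul_le_mul_of_nonneg_left hp (norm_nonneg _)
      calc ‖⟪a p.1 - a p₀.1, p.2.toH⟫‖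
          = |⟪a p.1 - a p₀.1, p.2.toH⟫| := Real.norm_eq_abs _
        _ ≤ ‖a p.1 - a p₀.1‖ * R := le_trans hb1 hb2
    refine squeeze_zero_norm' hb ?_
    have hc : Continuous fun p : X × WkSyn H => ‖a p.1 - a p₀.1‖ * R :=
      (((ha.comp continuous_fst).sub continuous_const).norm).mul continuous_const
    have h0 := hc.tendsto p₀
    rw [sub_self, norm_zero, zero_mul] at h0
    exact h0.mono_left nhdsWithin_le_nhds
  have hsum := h1.add ((h2.tendsto p₀).mono_left nhdsWithin_le_nhds)
  have heq : (fun p : X × WkSyn H =>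
      ⟪a p.1 - a p₀.1, p.2.toH⟫ + ⟪a p₀.1, p.2.toH⟫)
      = fun p : X × WkSyn H => ⟪a p.1, p.2.toH⟫ := by
    funext p; rw [inner_sub_left]; ring
  rw [heq] at hsum
  rw [zero_add] at hsum
  exact hsum

lemma wk_final_contradiction (a b d : ℝ) (ha : 0 ≤ a) (hb : 0 ≤ b) (hd : 0 < d)
    (h1 : a ^ 2 < 3 * d ^ 2 / 16) (h2 : b ^ 2 < 3 * d ^ 2 / 16) (h3 : d ≤ a + b) : False := by
  nlinarith [sq_nonneg (a - b), sq_nonneg (a + b)]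

end Aux

/-- For a minimal element `M` of the family of nonempty weakly-compact, skew-invariant subsets
of `X × H` that are convex along the fibers, every fiber `M_x` consists of a single vector. -/
theorem minimal_weakly_compact_convex_invariant_set_has_singleton_fibers
    {X : Type*} [MetricSpace X] [CompactSpace X]
    {Γ : Type*} [Monoid Γ]
    {H : Type*} [NormedAddCommGroup H] [InnerProductSpace ℝ H] [CompleteSpace H]
    [TopologicalSpace.SeparableSpace H]
    (act : Γ → X → X)
    (hact_one : ∀ x, act 1 x = x)
    (hact_mul : ∀ f g x, act (f * g) x = act f (act g x))
    (hact_cont : ∀ f, Continuous (act f))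
    (hmin : ∀ x, Dense (Set.range fun f => act f x))
    (Ψ : Γ → X → (H ≃ₗᵢ[ℝ] H)) (ρ : Γ → X → H)
    (hΨ_cont : ∀ f, Continuous fun x =>
      ((Ψ f x).toLinearIsometry.toContinuousLinearMap : H →L[ℝ] H))
    (hρ_cont : ∀ f, Continuous fun x => ρ f x)
    (hΨ_coc : ∀ f g x v, Ψ (f * g) x v = Ψ f (act g x) (Ψ g x v))
    (hρ_coc : ∀ f g x, ρ (f * g) x = ρ f (act g x) + Ψ f (act g x) (ρ g x))
    (M : Set (X × H)) (hM_ne : M.Nonempty)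
    (hM_comp : @IsCompact (X × H) (@instTopologicalSpaceProd X H _ (weakTopology H)) M)
    (hM_inv : ∀ f x v, (x, v) ∈ M → (act f x, Ψ f x v + ρ f x) ∈ M)
    (hM_conv : ∀ x, Convex ℝ {v : H | (x, v) ∈ M})
    (hM_min : ∀ M' : Set (X × H), M' ⊆ M → M'.Nonempty →
      @IsCompact (X × H) (@instTopologicalSpaceProd X H _ (weakTopology H)) M' →
      (∀ f x v, (x, v) ∈ M' → (act f x, Ψ f x v + ρ f x) ∈ M') →
      (∀ x, Convex ℝ {v : H | (x, v) ∈ M'}) →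
      M' = M) :
    ∀ x : X, ∃! v : H, (x, v) ∈ M := by
  classical
  -- the compactness hypothesis, in the type-synonym world
  have hMcw : IsCompact {p : X × WkSyn H | ((p.1, p.2.toH) : X × H) ∈ M} := hM_comp
  -- the cocycle at the identity
  have hΨ1 : ∀ x v, Ψ 1 x v = v := by
    intro x v
    have h := hΨ_coc 1 1 x v
    rw [one_mul, hact_one] at h
    exact ((Ψ 1 x).injective h).symm
  have hρ1 : ∀ x, ρ 1 x = 0 := by
    intro x
    have h := hρ_coc 1 1 x
    rw [one_mul, hact_one, hΨ1] at h
    nth_rewrite 1 [← add_zero (ρ 1 x)] at h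
    exact (add_left_cancel h).symm
  -- a uniform bound on the Hilbert-space part of M
  obtain ⟨R, hR0, hRbd⟩ : ∃ R : ℝ, 0 ≤ R ∧ ∀ p ∈ M, ‖(p.2 : H)‖ ≤ R := by
    have hptwise : ∀ y : H, ∃ C, ∀ m : M, ‖(innerSL ℝ ((m : X × H).2)) y‖ ≤ C := by
      intro y
      have hc : Continuous (fun p : X × WkSyn H => (innerSL ℝ y) p.2.toH) :=
        (wkSyn_continuous_apply (innerSL ℝ y)).comp continuous_snd
      have hK : IsCompact ((fun p : X × WkSyn H => (innerSL ℝ y) p.2.toH) ''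
          {p : X × WkSyn H | ((p.1, p.2.toH) : X × H) ∈ M}) := hMcw.image hc
      obtain ⟨C, hC⟩ := hK.isBounded.exists_norm_le
      refine ⟨C, fun m => ?_⟩
      have heq : (innerSL ℝ ((m : X × H).2)) y = (innerSL ℝ y) ((m : X × H).2) := by
        simp [real_inner_comm]
      rw [heq]
      refine hC _ ⟨((m : X × H).1, (m : X × H).2), ?_, rfl⟩
      exact m.2
    obtain ⟨C', hC'⟩ := banach_steinhaus hptwise
    refine ⟨max C' 0, le_max_right _ _, ?_⟩
    intro p hp
    rcases eq_or_ne (p.2 : H) 0 with h0 | h0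
    · simp [h0]
    · have h1 : ‖p.2‖ * ‖p.2‖ = (innerSL ℝ p.2) p.2 := by
        simp [real_inner_self_eq_norm_mul_norm, sq]
      have h2 : ‖(innerSL ℝ p.2) p.2‖ ≤ ‖innerSL ℝ (p.2 : H)‖ * ‖(p.2 : H)‖ :=
        (innerSL ℝ (p.2 : H)).le_opNorm _
      have h3 : ‖innerSL ℝ (p.2 : H)‖ ≤ C' := hC' ⟨p, hp⟩
      have h4 : 0 < ‖(p.2 : H)‖ := norm_pos_iff.mpr h0
      have h5 : ‖p.2‖ * ‖p.2‖ ≤ C' * ‖p.2‖ := by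
        calc ‖p.2‖ * ‖p.2‖ = (innerSL ℝ p.2) p.2 := h1
          _ ≤ ‖(innerSL ℝ p.2) p.2‖ := le_abs_self _
          _ ≤ ‖innerSL ℝ (p.2 : H)‖ * ‖(p.2 : H)‖ := h2
          _ ≤ C' * ‖p.2‖ := mul_le_mul_of_nonneg_right h3 (le_of_lt h4)
      have h6 : ‖(p.2 : H)‖ ≤ C' := le_of_mul_le_mul_right h5 h4
      exact le_trans h6 (le_max_left _ _)
  -- every fiber is nonempty
  have hfiber : ∀ x : X, ∃ v : H, (x, v) ∈ M := by
    obtain ⟨p₀, hp₀⟩ := hM_ne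
    intro x
    set Mw : Set (X × WkSyn H) := {p : X × WkSyn H | ((p.1, p.2.toH) : X × H) ∈ M}
      with hMwdef
    have hPcomp : IsCompact (Prod.fst '' Mw) := hMcw.image continuous_fst
    have hPclosed : IsClosed (Prod.fst '' Mw) := hPcomp.isClosed
    have hsub : Set.range (fun f : Γ => act f p₀.1) ⊆ Prod.fst '' Mw := by
      rintro y ⟨f, rfl⟩
      refine ⟨(act f p₀.1, Ψ f p₀.1 p₀.2 + ρ f p₀.1), ?_, rfl⟩
      rw [hMwdef]
      exact hM_inv f p₀.1 p₀.2 (by simpa using hp₀)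
    have hxmem : x ∈ Prod.fst '' Mw := by
      have hx : x ∈ closure (Set.range fun f : Γ => act f p₀.1) := by
        rw [(hmin p₀.1).closure_eq]; exact Set.mem_univ x
      exact closure_minimal hsub hPclosed hx
    obtain ⟨p, hpM, hpx⟩ := hxmem
    rw [hMwdef] at hpM
    exact ⟨p.2.toH, by rw [← hpx]; exact hpM⟩
  -- the key uniqueness claim
  have key : ∀ (xb : X) (u w : H), (xb, u) ∈ M → (xb, w) ∈ M → u = w := by
    intro xb u w hu hw
    by_contra hne
    have hδ₀ : 0 < ‖u - w‖ := by
      rw [norm_sub_pos_iff]; exact hne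
    set δ₀ := ‖u - w‖ with hδ₀def
    -- the supremum of squared norms over M
    have hbdd2 : BddAbove ((fun p : X × H => ‖p.2‖ ^ 2) '' M) := by
      refine ⟨R ^ 2, ?_⟩
      rintro r ⟨p, hp, rfl⟩
      have := hRbd p hp
      show ‖p.2‖ ^ 2 ≤ R ^ 2
      nlinarith [norm_nonneg p.2]
    set s₂ := sSup ((fun p : X × H => ‖p.2‖ ^ 2) '' M) with hs₂def
    obtain ⟨r₁, hr₁mem, hr₁⟩ :=
      exists_lt_of_lt_csSup (hM_ne.image (fun p : X × H => ‖p.2‖ ^ 2))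
        (show s₂ - δ₀ ^ 2 / 16 < s₂ by nlinarith)
    obtain ⟨p₁, hp₁, hp₁eq⟩ := hr₁mem
    set v₀ := p₁.2 with hv₀def
    have hv₀ : s₂ - δ₀ ^ 2 / 16 < ‖v₀‖ ^ 2 := by
      rw [← hp₁eq] at hr₁; simpa using hr₁
    -- the supremum of the linear functional ⟪v₀, ·⟫ over M
    have hbddl : BddAbove ((fun p : X × H => ⟪v₀, p.2⟫) '' M) := by
      refine ⟨‖v₀‖ * R, ?_⟩
      rintro r ⟨p, hp, rfl⟩
      calc ⟪v₀, p.2⟫ ≤ ‖v₀‖ * ‖p.2‖ := real_inner_le_norm _ _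
        _ ≤ ‖v₀‖ * R := mul_le_mul_of_nonneg_left (hRbd p hp) (norm_nonneg _)
    set s := sSup ((fun p : X × H => ⟪v₀, p.2⟫) '' M) with hsdef
    have hsle : ∀ p ∈ M, ⟪v₀, (p : X × H).2⟫ ≤ s := fun p hp =>
      le_csSup hbddl ⟨p, hp, rfl⟩
    have hsv₀ : ‖v₀‖ ^ 2 ≤ s := by
      have h := hsle p₁ hp₁
      rwa [← hv₀def, real_inner_self_eq_norm_sq] at h
    set δ := δ₀ ^ 2 / 32 with hδdef
    have hδ : 0 < δ := by positivity
    -- the "slice-avoiding" set E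
    set E : Set (X × H) :=
      M ∩ ⋂ f : Γ, {p : X × H | ‖p.2‖ ≤ R ∧ ⟪v₀, Ψ f p.1 p.2 + ρ f p.1⟫ ≤ s - δ}
      with hEdef
    -- each constraint set is weakly closed
    have hSclosed : ∀ f : Γ, IsClosed {p : X × WkSyn H |
        ‖p.2.toH‖ ≤ R ∧ ⟪v₀, Ψ f p.1 p.2.toH + ρ f p.1⟫ ≤ s - δ} := by
      intro f
      set T : X → H →L[ℝ] H := fun x => (Ψ f x).toLinearIsometry.toContinuousLinearMap with hT
      set af : X → H := fun x => ContinuousLinearMap.adjoint (T x) v₀ with haf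
      have hafc : Continuous af := by
        have h1 : Continuous fun x => ContinuousLinearMap.adjoint (T x) :=
          (ContinuousLinearMap.adjoint (𝕜 := ℝ) (E := H) (F := H)).continuous.comp (hΨ_cont f)
        exact (ContinuousLinearMap.apply ℝ H v₀).continuous.comp h1
      have hinner : ∀ (x : X) (v : H), ⟪v₀, Ψ f x v⟫ = ⟪af x, v⟫ := by
        intro x v
        rw [haf]
        rw [ContinuousLinearMap.adjoint_inner_left]
        congr 1
      have hA : IsClosed {p : X × WkSyn H | ‖p.2.toH‖ ≤ R} := by
        have hball := wkSyn_isClosed_ball (H := H) R hR0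
        exact hball.preimage continuous_snd
      have hGc : ContinuousOn (fun p : X × WkSyn H =>
          ⟪af p.1, p.2.toH⟫ + ⟪v₀, ρ f p.1⟫)
          {p : X × WkSyn H | ‖p.2.toH‖ ≤ R} := by
        refine (wkSyn_continuousOn_inner af hafc R).add (Continuous.continuousOn ?_)
        exact Continuous.inner continuous_const ((hρ_cont f).comp continuous_fst)
      have hseteq : {p : X × WkSyn H |
          ‖p.2.toH‖ ≤ R ∧ ⟪v₀, Ψ f p.1 p.2.toH + ρ f p.1⟫ ≤ s - δ}
          = {p : X × WkSyn H | ‖p.2.toH‖ ≤ R} ∩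
            ((fun p : X × WkSyn H => ⟪af p.1, p.2.toH⟫ + ⟪v₀, ρ f p.1⟫) ⁻¹'
              Set.Iic (s - δ)) := by
        ext p
        simp only [Set.mem_setOf_eq, Set.mem_inter_iff, Set.mem_preimage, Set.mem_Iic]
        constructor
        · rintro ⟨hc1, hc2⟩
          refine ⟨hc1, ?_⟩
          rw [inner_add_right, hinner] at hc2
          exact hc2
        · rintro ⟨hc1, hc2⟩
          refine ⟨hc1, ?_⟩
          rw [inner_add_right, hinner]
          exact hc2
      rw [hseteq]
      exact hGc.preimage_isClosed_of_isClosed hA isClosed_Iic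
    -- E is weakly compact
    have hEcompw : IsCompact ({p : X × WkSyn H | ((p.1, p.2.toH) : X × H) ∈ M} ∩
        ⋂ f : Γ, {p : X × WkSyn H |
          ‖p.2.toH‖ ≤ R ∧ ⟪v₀, Ψ f p.1 p.2.toH + ρ f p.1⟫ ≤ s - δ}) :=
      hMcw.inter_right (isClosed_iInter fun f => hSclosed f)
    have hEcomp : @IsCompact (X × H)
        (@instTopologicalSpaceProd X H _ (weakTopology H)) E := hEcompw
    -- E is empty (else minimality forces E = M, contradicting the slice being nonempty)
    have hEeq : E = ∅ := by
      by_contra hEne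
      have hEne' : E.Nonempty := Set.nonempty_iff_ne_empty.mpr hEne
      have hEsub : E ⊆ M := by rw [hEdef]; exact Set.inter_subset_left
      have hEinv : ∀ f x v, (x, v) ∈ E → (act f x, Ψ f x v + ρ f x) ∈ E := by
        intro f x v hv
        rw [hEdef] at hv ⊢
        obtain ⟨hvM, hvI⟩ := hv
        have hvI' := Set.mem_iInter.mp hvI
        refine ⟨hM_inv f x v hvM, Set.mem_iInter.mpr fun g => ?_⟩
        refine ⟨hRbd _ (hM_inv f x v hvM), ?_⟩
        have h := (hvI' (g * f)).2
        have heq : Ψ g (act f x) (Ψ f x v + ρ f x) + ρ g (act f x)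
            = Ψ (g * f) x v + ρ (g * f) x := by
          rw [hΨ_coc g f x v, hρ_coc g f x, map_add]
          abel
        show ⟪v₀, Ψ g (act f x) (Ψ f x v + ρ f x) + ρ g (act f x)⟫ ≤ s - δ
        rw [heq]
        exact h
      have hEconv : ∀ x, Convex ℝ {v : H | (x, v) ∈ E} := by
        intro x v1 h1 v2 h2 a b ha hb hab
        simp only [Set.mem_setOf_eq, hEdef, Set.mem_inter_iff] at h1 h2 ⊢
        obtain ⟨h1M, h1I⟩ := h1
        obtain ⟨h2M, h2I⟩ := h2
        refine ⟨hM_conv x h1M h2M ha hb hab, Set.mem_iInter.mpr fun f => ?_⟩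
        have hf1 := Set.mem_iInter.mp h1I f
        have hf2 := Set.mem_iInter.mp h2I f
        constructor
        · calc ‖(a • v1 + b • v2 : H)‖ ≤ ‖a • v1‖ + ‖b • v2‖ := norm_add_le _ _
            _ = a * ‖v1‖ + b * ‖v2‖ := by
                rw [norm_smul, norm_smul, Real.norm_of_nonneg ha, Real.norm_of_nonneg hb]
            _ ≤ a * R + b * R :=
                add_le_add (mul_le_mul_of_nonneg_left hf1.1 ha)
                  (mul_le_mul_of_nonneg_left hf2.1 hb)
            _ = R := by rw [← add_mul, hab, one_mul]
        · have hmap : Ψ f x (a • v1 + b • v2) + ρ f x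
              = a • (Ψ f x v1 + ρ f x) + b • (Ψ f x v2 + ρ f x) := by
            have hρeq : a • ρ f x + b • ρ f x = ρ f x := by
              rw [← add_smul, hab, one_smul]
            rw [map_add, map_smul, map_smul, smul_add, smul_add]
            rw [show a • (Ψ f x) v1 + a • ρ f x + (b • (Ψ f x) v2 + b • ρ f x)
                = a • (Ψ f x) v1 + b • (Ψ f x) v2 + (a • ρ f x + b • ρ f x) by abel, hρeq]
          show ⟪v₀, Ψ f x (a • v1 + b • v2) + ρ f x⟫ ≤ s - δ
          rw [hmap, inner_add_right, real_inner_smul_right, real_inner_smul_right]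
          calc a * ⟪v₀, Ψ f x v1 + ρ f x⟫ + b * ⟪v₀, Ψ f x v2 + ρ f x⟫
              ≤ a * (s - δ) + b * (s - δ) :=
                add_le_add (mul_le_mul_of_nonneg_left hf1.2 ha)
                  (mul_le_mul_of_nonneg_left hf2.2 hb)
            _ = s - δ := by rw [← add_mul, hab, one_mul]
      have hEM := hM_min E hEsub hEne' hEcomp hEinv hEconv
      -- but some point of M has ⟪v₀, ·⟫ > s - δ
      obtain ⟨r₂, hr₂mem, hr₂⟩ :=
        exists_lt_of_lt_csSup (hM_ne.image (fun p : X × H => ⟪v₀, p.2⟫))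
          (show s - δ < s by linarith)
      obtain ⟨p₂, hp₂, hp₂eq⟩ := hr₂mem
      have hp₂E : p₂ ∈ E := by rw [hEM]; exact hp₂
      rw [hEdef] at hp₂E
      have h1 := (Set.mem_iInter.mp hp₂E.2 1).2
      rw [hΨ1, hρ1, add_zero] at h1
      rw [← hp₂eq] at hr₂
      simp only at hr₂
      linarith
    -- midpoint of u and w
    set m : H := (2⁻¹ : ℝ) • u + (2⁻¹ : ℝ) • w with hmdef
    have hmM : (xb, m) ∈ M :=
      hM_conv xb hu hw (by norm_num) (by norm_num) (by norm_num)
    have hmnot : (xb, m) ∉ E := by rw [hEeq]; exact Set.notMem_empty _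
    have hex : ∃ f : Γ, s - δ < ⟪v₀, Ψ f xb m + ρ f xb⟫ := by
      by_contra hall
      push_neg at hall
      exact hmnot (by
        rw [hEdef]
        exact ⟨hmM, Set.mem_iInter.mpr fun f => ⟨hRbd _ hmM, hall f⟩⟩)
    obtain ⟨f, hf⟩ := hex
    set p := Ψ f xb u + ρ f xb with hpdef
    set q := Ψ f xb w + ρ f xb with hqdef
    have hpM : (act f xb, p) ∈ M := hM_inv f xb u hu
    have hqM : (act f xb, q) ∈ M := hM_inv f xb w hw
    have hmid : Ψ f xb m + ρ f xb = (2⁻¹ : ℝ) • p + (2⁻¹ : ℝ) • q := by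
      have hρeq : (2⁻¹ : ℝ) • ρ f xb + (2⁻¹ : ℝ) • ρ f xb = ρ f xb := by
        rw [← add_smul]; norm_num
      rw [hmdef, hpdef, hqdef, map_add, map_smul, map_smul, smul_add, smul_add]
      rw [show (2⁻¹ : ℝ) • (Ψ f xb) u + (2⁻¹ : ℝ) • ρ f xb
            + ((2⁻¹ : ℝ) • (Ψ f xb) w + (2⁻¹ : ℝ) • ρ f xb)
          = (2⁻¹ : ℝ) • (Ψ f xb) u + (2⁻¹ : ℝ) • (Ψ f xb) w
            + ((2⁻¹ : ℝ) • ρ f xb + (2⁻¹ : ℝ) • ρ f xb) by abel, hρeq]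
    have hfp : s - δ < 2⁻¹ * ⟪v₀, p⟫ + 2⁻¹ * ⟪v₀, q⟫ := by
      rw [hmid, inner_add_right, real_inner_smul_right, real_inner_smul_right] at hf
      exact hf
    have hps : ⟪v₀, p⟫ ≤ s := hsle _ hpM
    have hqs : ⟪v₀, q⟫ ≤ s := hsle _ hqM
    have hpgt : s - 2 * δ < ⟪v₀, p⟫ := by linarith
    have hqgt : s - 2 * δ < ⟪v₀, q⟫ := by linarith
    have hpn : ‖p‖ ^ 2 ≤ s₂ := le_csSup hbdd2 ⟨(act f xb, p), hpM, rfl⟩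
    have hqn : ‖q‖ ^ 2 ≤ s₂ := le_csSup hbdd2 ⟨(act f xb, q), hqM, rfl⟩
    have hexp : ∀ z : H, ‖z - v₀‖ ^ 2 = ‖z‖ ^ 2 - 2 * ⟪v₀, z⟫ + ‖v₀‖ ^ 2 := by
      intro z
      rw [norm_sub_sq_real, real_inner_comm]
    have hpv : ‖p - v₀‖ ^ 2 < 3 * δ₀ ^ 2 / 16 := by
      have h := hexp p
      rw [hδdef] at hpgt
      linarith [h, hpn, hpgt, hsv₀, hv₀]
    have hqv : ‖q - v₀‖ ^ 2 < 3 * δ₀ ^ 2 / 16 := by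
      have h := hexp q
      rw [hδdef] at hqgt
      linarith [h, hqn, hqgt, hsv₀, hv₀]
    have hpq : ‖p - q‖ = δ₀ := by
      have hdiff : p - q = Ψ f xb (u - w) := by
        rw [hpdef, hqdef, map_sub]; abel
      rw [hdiff, LinearIsometryEquiv.norm_map]
    have htri : δ₀ ≤ ‖p - v₀‖ + ‖q - v₀‖ := by
      calc δ₀ = ‖p - q‖ := hpq.symm
        _ = ‖(p - v₀) - (q - v₀)‖ := by rw [sub_sub_sub_cancel_right]
        _ ≤ ‖p - v₀‖ + ‖q - v₀‖ := norm_sub_le _ _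
    exact wk_final_contradiction _ _ _ (norm_nonneg (p - v₀)) (norm_nonneg (q - v₀))
      hδ₀ hpv hqv htri
  -- conclude
  intro x
  obtain ⟨v, hv⟩ := hfiber x
  exact ⟨v, hv, fun w hw => key x w v hw hv⟩
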